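/- Let |Ψ⟩ = (|01⟩ + |10⟩)/√2 in ℂ² ⊗ ℂ², with measurement settings A_0 = B_0 = σ_z, A_1 = cos(2α) σ_z − sin(2α) σ_x with α = −5π/6, and B_1 = cos(2β) σ_z − sin(2β) σ_x with β = π/6. Then the CHSH winning probability w = (1/4) Σ_{x,y∈{0,1}} Σ_{a,b∈{0,1}: x·y ⊕ a ⊕ b = 1} P(a,b|x,y) equals 13/16 = 0.8125. -/

import Mathlib

set_option maxHeartbeats 2000000


open Matrix Kronecker

noncomputable section

/-- Pauli Z matrix. -/
def σz : Matrix (Fin 2) (Fin 2) ℂ := !![1, 0; 0, -1]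

/-- Pauli X matrix. -/
def σx : Matrix (Fin 2) (Fin 2) ℂ := !![0, 1; 1, 0]

/-- Outcome projector `Π_a^O = (I ± O)/2` of a binary observable `O`. -/
def projQ (a : Fin 2) (O : Matrix (Fin 2) (Fin 2) ℂ) : Matrix (Fin 2) (Fin 2) ℂ :=
  if a = 0 then (2⁻¹ : ℂ) • (1 + O) else (2⁻¹ : ℂ) • (1 - O)

/-- Expectation value `⟨ψ| M |ψ⟩` on the two-qubit space `ℂ² ⊗ ℂ²`,
with vectors indexed by `Fin 2 × Fin 2` (so `|ab⟩` is the basis vector at `(a,b)`). -/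
def expval (M : Matrix (Fin 2 × Fin 2) (Fin 2 × Fin 2) ℂ) (ψ : Fin 2 × Fin 2 → ℂ) : ℂ :=
  ∑ p, star (ψ p) * M.mulVec ψ p

/-- Born-rule correlation `P(a,b|x,y) = ⟨ψ| Π_a^{A} ⊗ Π_b^{B} |ψ⟩`
for measurement settings `A` (Alice) and `B` (Bob). -/
def corr (A B : Matrix (Fin 2) (Fin 2) ℂ) (a b : Fin 2) (ψ : Fin 2 × Fin 2 → ℂ) : ℂ :=
  expval (projQ a A ⊗ₖ projQ b B) ψ

/-- Measurement observable `cos(2t) σ_z - sin(2t) σ_x`. -/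
def obs (t : ℝ) : Matrix (Fin 2) (Fin 2) ℂ :=
  (Real.cos (2 * t) : ℂ) • σz - (Real.sin (2 * t) : ℂ) • σx

/-- CHSH winning probability with uniform inputs:
`w = (1/4) ∑_{x,y} ∑_{a,b : x·y ⊕ a ⊕ b = 1} P(a,b|x,y)` (arithmetic in `Fin 2`). -/
def chshWin (A B : Fin 2 → Matrix (Fin 2) (Fin 2) ℂ) (ψ : Fin 2 × Fin 2 → ℂ) : ℂ :=
  (4⁻¹ : ℂ) * ∑ x : Fin 2, ∑ y : Fin 2, ∑ a : Fin 2, ∑ b : Fin 2,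
    if x * y + a + b = 1 then corr (A x) (B y) a b ψ else 0

/-- For the Bell state `|Ψ⟩ = (|01⟩ + |10⟩)/√2` with settings
`A_0 = B_0 = σ_z`, `A_1 = cos 2α σ_z - sin 2α σ_x` with `α = -5π/6`, and
`B_1 = cos 2β σ_z - sin 2β σ_x` with `β = π/6`, the CHSH winning probability
equals `13/16 = 0.8125` (the maximal CHSH value in class `Q_{2a}`). -/
theorem class2a_chsh_winning_probability :
    let ψ : Fin 2 × Fin 2 → ℂ := fun p =>
      if p = (0, 1) then ((Real.sqrt 2)⁻¹ : ℂ)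
      else if p = (1, 0) then ((Real.sqrt 2)⁻¹ : ℂ) else 0
    let A : Fin 2 → Matrix (Fin 2) (Fin 2) ℂ := fun x =>
      if x = 0 then σz else obs (-5 * Real.pi / 6)
    let B : Fin 2 → Matrix (Fin 2) (Fin 2) ℂ := fun y =>
      if y = 0 then σz else obs (Real.pi / 6)
    chshWin A B ψ = (13 / 16 : ℂ) := by
  intro ψ A B
  have hc1 : Real.cos (2 * (-5 * Real.pi / 6)) = 1/2 := by
    have : 2 * (-5 * Real.pi / 6) = -(2*Real.pi) + Real.pi/3 := by ring
    rw [this, Real.cos_add, Real.cos_neg, Real.sin_neg]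
    simp [Real.cos_pi_div_three, Real.sin_two_pi, Real.cos_two_pi]
  have hs1 : Real.sin (2 * (-5 * Real.pi / 6)) = Real.sqrt 3 / 2 := by
    have : 2 * (-5 * Real.pi / 6) = -(2*Real.pi) + Real.pi/3 := by ring
    rw [this, Real.sin_add, Real.cos_neg, Real.sin_neg]
    simp [Real.sin_pi_div_three, Real.sin_two_pi, Real.cos_two_pi]
  have hc2 : Real.cos (2 * (Real.pi / 6)) = 1/2 := by
    rw [show 2 * (Real.pi/6) = Real.pi/3 by ring, Real.cos_pi_div_three]
  have hs2 : Real.sin (2 * (Real.pi / 6)) = Real.sqrt 3 / 2 := by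
    rw [show 2 * (Real.pi/6) = Real.pi/3 by ring, Real.sin_pi_div_three]
  have h2 : ((Real.sqrt 2 : ℝ) : ℂ) * ((Real.sqrt 2 : ℝ) : ℂ) = 2 := by
    exact_mod_cast Real.mul_self_sqrt (by norm_num : (0:ℝ) ≤ 2)
  simp only [chshWin, corr, expval, projQ, obs, A, B, ψ, σz, σx,
    Fin.sum_univ_two, Fintype.sum_prod_type, Matrix.mulVec, dotProduct,
    Matrix.kroneckerMap_apply, hc1, hs1, hc2, hs2]
  norm_num [Matrix.smul_apply, Matrix.add_apply, Matrix.sub_apply, Matrix.one_apply,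
    Matrix.cons_val_zero, Matrix.cons_val_one, Matrix.head_cons, Prod.ext_iff]
  push_cast
  field_simp
  ring_nf
  have h3 : ((Real.sqrt 3 : ℝ) : ℂ)^2 = 3 := by
    exact_mod_cast Real.sq_sqrt (by norm_num : (0:ℝ) ≤ 3)
  have hne : ((Real.sqrt 2 : ℝ) : ℂ) ≠ 0 := by
    exact_mod_cast Real.sqrt_ne_zero'.mpr (by norm_num : (0:ℝ) < 2)
  rw [h3]
  field_simp
  ring_nf
  linear_combination (-3328 : ℂ) * h2
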